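/- arXiv:1311.7113 — 3 statements merged into one kernel-verified Lean document; each statement's English description precedes it below -/
import Mathlib

section
/- Let M = {v_1^{m_1}, ..., v_ℓ^{m_ℓ}} with distinct ranks and n = Σ m_i. There exists a single-error-correcting code C_K ⊆ S(M) in the Kendall τ-metric (i.e., with minimum Kendall τ-distance at least 3) of size |C_K| ≥ |S(M)| / (2(n − m_1) + 1). -/
/-- `AdjTrans σ π` : the sequence `π` is obtained from the sequence `σ` by exchanging
two distinct adjacent elements (an adjacent transposition). -/
def AdjTrans (σ π : List ℤ) : Prop :=
  ∃ (l₁ l₂ : List ℤ) (a b : ℤ), a ≠ b ∧ σ = l₁ ++ a :: b :: l₂ ∧ π = l₁ ++ b :: a :: l₂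

/-- `StepsTo n σ π` : `π` can be obtained from `σ` by a sequence of `n` adjacent
transpositions. -/
def StepsTo : ℕ → List ℤ → List ℤ → Prop
  | 0 => fun σ π => σ = π
  | n + 1 => fun σ π => ∃ τ, AdjTrans σ τ ∧ StepsTo n τ π

/-- The Kendall τ-distance between two sequences: the minimum number of adjacent
transpositions needed to transform one into the other. -/
noncomputable def dK (σ π : List ℤ) : ℕ := sInf {n | StepsTo n σ π}

/-- The list `[a, a+1, ..., a+len-1]` of integers. -/
def rangeList (a len : ℕ) : List ℤ := (List.range' a len).map (fun x => (x : ℤ))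

/-- The substitution map `T_θ`: the `r`-th occurrence (from the left, `0`-indexed) of a
rank `a` in `σ` is replaced by the `r`-th entry of the list `θ a`. -/
def Tmap (θ : ℤ → List ℤ) (σ : List ℤ) : List ℤ :=
  (List.range σ.length).map (fun j =>
    (θ (σ.getD j 0)).getD ((σ.take j).count (σ.getD j 0)) 0)

/-- `psiEntry σ a s` : the number of positions in `σ` strictly to the right of the `s`-th
occurrence (`0`-indexed) of `a` in `σ` that hold an element smaller than `a`. -/
def psiEntry (σ : List ℤ) (a : ℤ) (s : ℕ) : ℕ :=
  (σ.drop (((σ.indexesOf a).getD s σ.length) + 1)).countP (fun x => decide (x < a))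

/-- The Manhattan distance between two vectors of naturals (presented as lists). -/
def manhattanL (x y : List ℕ) : ℕ :=
  ∑ i ∈ Finset.range (max x.length y.length), ((x.getD i 0 : ℤ) - (y.getD i 0 : ℤ)).natAbs

/-- The Lee distance over `Z_q` between two vectors with entries in `{0, …, q-1}`
(presented as lists). -/
def leeDistL (q : ℕ) (x y : List ℕ) : ℕ :=
  ∑ i ∈ Finset.range (max x.length y.length),
    min (((x.getD i 0 : ℤ) - (y.getD i 0 : ℤ)).natAbs)
      (q - ((x.getD i 0 : ℤ) - (y.getD i 0 : ℤ)).natAbs)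

/-- The Lee distance between two vectors over `ZMod q`. -/
def zmodLee {q N : ℕ} (x y : Fin N → ZMod q) : ℕ :=
  ∑ i, min (x i - y i).val (y i - x i).val

/-- `permList k σ` : `σ` is (an ordering representing) a permutation of `{1, …, k}`. -/
def permList (k : ℕ) (σ : List ℤ) : Prop :=
  (↑σ : Multiset ℤ) = (↑(rangeList 1 k) : Multiset ℤ)

/-- The multiset `M_{k,r} = {0^k, k+1, …, k+r}`. -/
def Mkr (k r : ℕ) : Multiset ℤ :=
  Multiset.replicate k (0 : ℤ) + (↑(rangeList (k + 1) r) : Multiset ℤ)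

/-- `α_{↓k}` : delete from `α` all elements larger than `k`. -/
def restrictTo (k : ℕ) (α : List ℤ) : List ℤ :=
  α.filter (fun x => decide (x ≤ (k : ℤ)))

/-- `α_{k↦0}` : replace in `α` every element of `{1, …, k}` by `0`. -/
def mapToZero (k : ℕ) (α : List ℤ) : List ℤ :=
  α.map (fun x => if 1 ≤ x ∧ x ≤ (k : ℤ) then 0 else x)

/-- `star σ ρ = σ ∗ ρ` : replace the zeros of `ρ`, from left to right, by the elements
of `σ` in order. -/
def starP : List ℤ → List ℤ → List ℤ
  | _, [] => []
  | σ, x :: ρ' => if x = 0 then σ.headD 0 :: starP σ.tail ρ' else x :: starP σ ρ'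

namespace Stmt8Aux

def Fker (u : ℤ → ℕ → ℤ) : List ℤ → List ℤ → ℤ
  | _, [] => 0
  | p, x :: r => u x (p.count x) * (r.countP (fun y => decide (y < x)) : ℤ) + Fker u (p ++ [x]) r

lemma Fker_perm (u : ℤ → ℕ → ℤ) : ∀ (r p p' : List ℤ), p.Perm p' → Fker u p r = Fker u p' r
  | [], _, _, _ => rfl
  | x :: r, p, p', h => by
    simp only [Fker]
    rw [h.count_eq, Fker_perm u r (p ++ [x]) (p' ++ [x]) (h.append_right [x])]

lemma Fker_swap (u : ℤ → ℕ → ℤ) (a b : ℤ) (hab : a < b) :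
    ∀ (l₁ p l₂ : List ℤ),
      Fker u p (l₁ ++ b :: a :: l₂) = Fker u p (l₁ ++ a :: b :: l₂) + u b ((p ++ l₁).count b)
  | [], p, l₂ => by
    have hba : ¬ (b < a) := not_lt.mpr hab.le
    have hne : a ≠ b := hab.ne
    have h3 : Fker u (p ++ [b] ++ [a]) l₂ = Fker u (p ++ [a] ++ [b]) l₂ := by
      apply Fker_perm
      simp only [List.append_assoc]
      exact List.Perm.append_left p (List.Perm.swap a b [])
    simp only [List.nil_append, Fker, List.countP_cons, decide_eq_true_eq, hab, hba,
      if_true, if_false, List.count_append, List.count_cons, List.count_nil,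
      List.append_nil, h3]
    simp only [beq_iff_eq, hne, hne.symm, if_false, add_zero]
    push_cast
    ring
  | x :: l₁, p, l₂ => by
    simp only [List.cons_append, Fker, List.append_eq]
    rw [Fker_swap u a b hab l₁ (p ++ [x]) l₂]
    have hc : (l₁ ++ b :: a :: l₂).countP (fun y => decide (y < x))
        = (l₁ ++ a :: b :: l₂).countP (fun y => decide (y < x)) := by
      simp only [List.countP_append, List.countP_cons]; omega
    rw [hc]
    have h2 : p ++ [x] ++ l₁ = p ++ x :: l₁ := by simp
    rw [h2]
    ring


lemma prefix_eq_of_count (b : ℤ) : ∀ (P₁ P₂ Q₁ Q₂ : List ℤ),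
    P₁ ++ b :: Q₁ = P₂ ++ b :: Q₂ → P₁.count b = P₂.count b → P₁ = P₂ ∧ Q₁ = Q₂
  | [], [], Q₁, Q₂, h, _ => ⟨rfl, by simpa using h⟩
  | [], p :: P₂, Q₁, Q₂, h, hc => by
    exfalso
    simp only [List.nil_append, List.cons_append, List.cons.injEq] at h
    rw [← h.1] at hc
    simp [List.count_cons] at hc
  | p :: P₁, [], Q₁, Q₂, h, hc => by
    exfalso
    simp only [List.nil_append, List.cons_append, List.cons.injEq] at h
    rw [← h.1] at hc
    simp [List.count_cons] at hc
  | p₁ :: P₁, p₂ :: P₂, Q₁, Q₂, h, hc => by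
    simp only [List.cons_append, List.cons.injEq] at h
    obtain ⟨hp, ht⟩ := h
    subst hp
    simp only [List.count_cons] at hc
    obtain ⟨h1, h2⟩ := prefix_eq_of_count b P₁ P₂ Q₁ Q₂ ht (by omega)
    exact ⟨by rw [h1], h2⟩

lemma adj_perm {σ π : List ℤ} (h : AdjTrans σ π) : σ.Perm π := by
  obtain ⟨l₁, l₂, a, b, _, h1, h2⟩ := h
  subst h1; subst h2
  exact List.Perm.append_left l₁ (List.Perm.swap b a l₂)

lemma StepsTo.perm : ∀ {n : ℕ} {σ π : List ℤ}, StepsTo n σ π → σ.Perm π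
  | 0, _, _, h => by rw [show StepsTo 0 = fun σ π => σ = π from rfl] at h; exact h ▸ List.Perm.refl _
  | n + 1, σ, π, h => by
    obtain ⟨τ, h1, h2⟩ := h
    exact (adj_perm h1).trans (StepsTo.perm h2)

lemma StepsTo.trans : ∀ {m n : ℕ} {σ τ π : List ℤ},
    StepsTo m σ τ → StepsTo n τ π → StepsTo (m + n) σ π
  | 0, n, σ, τ, π, h1, h2 => by
    have : σ = τ := h1
    rw [Nat.zero_add, this]; exact h2
  | m + 1, n, σ, τ, π, h1, h2 => by
    obtain ⟨ρ, ha, hs⟩ := h1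
    have hn : m + 1 + n = (m + n) + 1 := by omega
    rw [hn]
    exact ⟨ρ, ha, StepsTo.trans hs h2⟩

lemma StepsTo.cons : ∀ {n : ℕ} {σ π : List ℤ} (x : ℤ),
    StepsTo n σ π → StepsTo n (x :: σ) (x :: π)
  | 0, σ, π, x, h => by
    have : σ = π := h
    show x :: σ = x :: π
    rw [this]
  | n + 1, σ, π, x, h => by
    obtain ⟨τ, ⟨l₁, l₂, a, b, hab, e1, e2⟩, hs⟩ := h
    exact ⟨x :: τ, ⟨x :: l₁, l₂, a, b, hab, by simp [e1], by simp [e2]⟩, StepsTo.cons x hs⟩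

lemma steps_bubble (h : ℤ) : ∀ (l₁ l₂ : List ℤ), h ∉ l₁ →
    StepsTo l₁.length (l₁ ++ h :: l₂) (h :: (l₁ ++ l₂))
  | [], l₂, _ => by show StepsTo 0 _ _; rfl
  | x :: l₁, l₂, hmem => by
    have hx : x ≠ h := fun e => hmem (e ▸ List.mem_cons_self (a := x) (l := l₁))
    have h1 : StepsTo l₁.length (x :: (l₁ ++ h :: l₂)) (x :: h :: (l₁ ++ l₂)) :=
      StepsTo.cons x (steps_bubble h l₁ l₂ (fun hh => hmem (List.mem_cons_of_mem x hh)))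
    have h2 : StepsTo 1 (x :: h :: (l₁ ++ l₂)) (h :: x :: (l₁ ++ l₂)) :=
      ⟨h :: x :: (l₁ ++ l₂), ⟨[], l₁ ++ l₂, x, h, hx, rfl, rfl⟩, rfl⟩
    have := StepsTo.trans h1 h2
    simpa using this

lemma first_split {h : ℤ} : ∀ {σ : List ℤ}, h ∈ σ → ∃ l₁ l₂, σ = l₁ ++ h :: l₂ ∧ h ∉ l₁ := by
  intro σ hmem
  induction σ with
  | nil => simp at hmem
  | cons x σ' ih =>
    by_cases hx : x = h
    · exact ⟨[], σ', by simp [hx], by simp⟩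
    · have hm2 : h ∈ σ' := by
        rcases List.mem_cons.mp hmem with h1 | h1
        · exact absurd h1.symm hx
        · exact h1
      obtain ⟨l₁, l₂, e, hn⟩ := ih hm2
      refine ⟨x :: l₁, l₂, by simp [e], ?_⟩
      intro hmm
      rcases List.mem_cons.mp hmm with h1 | h1
      · exact hx h1.symm
      · exact hn h1

lemma connect : ∀ (π σ : List ℤ), σ.Perm π → ∃ n, StepsTo n σ π
  | [], σ, hp => ⟨0, by have := hp.eq_nil; exact this⟩
  | h :: π', σ, hp => by
    have hmem : h ∈ σ := hp.mem_iff.mpr (List.mem_cons_self (a := h) (l := π'))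
    obtain ⟨l₁, l₂, e, hn⟩ := first_split hmem
    have hperm : (l₁ ++ l₂).Perm π' := by
      have : (h :: (l₁ ++ l₂)).Perm (h :: π') := by
        refine List.Perm.trans List.perm_middle.symm ?_
        rw [← e]; exact hp
      exact this.cons_inv
    obtain ⟨n, hs⟩ := connect π' (l₁ ++ l₂) hperm
    exact ⟨l₁.length + n, StepsTo.trans (e ▸ steps_bubble h l₁ l₂ hn) (StepsTo.cons h hs)⟩
  termination_by π => π.length

end Stmt8Aux

open Stmt8Aux



/-- Corollary 1. Let `M = {v 0 ^ m 0, …, v (ℓ-1) ^ m (ℓ-1)}` with distinct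
ranks and positive multiplicities, `n = ∑ m i`.  There exists a single-error-correcting
code `C_K ⊆ S(M)` in the Kendall τ-metric (distinct codewords at distance at least `3`)
of size `|C_K| ≥ |S(M)| / (2(n - m 0) + 1)`. -/
theorem stmt8 (ℓ : ℕ) (v : ℕ → ℤ) (m : ℕ → ℕ)
    (hv : ∀ i j, i < j → j < ℓ → v i < v j)
    (hm : ∀ i, i < ℓ → 0 < m i) :
    ∃ CK : Set (List ℤ),
      (∀ σ ∈ CK,
        (↑σ : Multiset ℤ) = ∑ i ∈ Finset.range ℓ, Multiset.replicate (m i) (v i)) ∧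
      (∀ σ ∈ CK, ∀ π ∈ CK, σ ≠ π → 3 ≤ dK σ π) ∧
      (({σ : List ℤ | (↑σ : Multiset ℤ) =
          ∑ i ∈ Finset.range ℓ, Multiset.replicate (m i) (v i)}.ncard : ℝ) /
        (2 * ((∑ i ∈ Finset.range ℓ, m i) - m 0) + 1) ≤ (CK.ncard : ℝ)) := by
  classical
  set M : Multiset ℤ := ∑ i ∈ Finset.range ℓ, Multiset.replicate (m i) (v i) with hM
  set W : ℕ := (∑ i ∈ Finset.range ℓ, m i) - m 0 with hWdef
  set q : ℕ := 2 * W + 1 with hq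
  haveI : NeZero q := ⟨by omega⟩
  -- basic order facts about v
  have hvle : ∀ i j, i ≤ j → j < ℓ → v i ≤ v j := by
    intro i j hij hj
    rcases eq_or_lt_of_le hij with h | h
    · rw [h]
    · exact (hv i j h hj).le
  have hvlt_iff : ∀ i j, i < ℓ → j < ℓ → (v i < v j ↔ i < j) := by
    intro i j hi hj
    constructor
    · intro h
      by_contra hc
      push_neg at hc
      exact absurd (hvle j i hc hi) (not_le.mpr h)
    · intro h
      exact hv i j h hj
  have hvinj : ∀ i j, i < ℓ → j < ℓ → v i = v j → i = j := by
    intro i j hi hj he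
    rcases lt_trichotomy i j with h | h | h
    · exact absurd (hv i j h hj) (by rw [he]; exact lt_irrefl _)
    · exact h
    · exact absurd (hv j i h hi) (by rw [he]; exact lt_irrefl _)
  -- the weight function
  set u : ℤ → ℕ → ℤ :=
    fun b t => 1 + (t : ℤ) + ∑ j ∈ Finset.range ℓ, if 1 ≤ j ∧ v j < b then (m j : ℤ) else 0
    with hu
  have husum : ∀ i, 1 ≤ i → i < ℓ → ∀ t : ℕ,
      u (v i) t = 1 + (t : ℤ) + ∑ j ∈ Finset.Ico 1 i, (m j : ℤ) := by
    intro i h1 hi t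
    have hfe : (Finset.range ℓ).filter (fun j => 1 ≤ j ∧ v j < v i) = Finset.Ico 1 i := by
      ext j
      simp only [Finset.mem_filter, Finset.mem_range, Finset.mem_Ico]
      constructor
      · rintro ⟨hj, h1j, hlt⟩
        exact ⟨h1j, (hvlt_iff j i hj hi).mp hlt⟩
      · rintro ⟨h1j, hji⟩
        exact ⟨hji.trans hi, h1j, hv j i hji hi⟩
    rw [hu]
    dsimp only
    rw [← Finset.sum_filter, hfe]
  have hWsum : 1 ≤ ℓ → (W : ℤ) = ∑ j ∈ Finset.Ico 1 ℓ, (m j : ℤ) := by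
    intro h1
    have h2 : ∑ i ∈ Finset.range ℓ, m i = m 0 + ∑ j ∈ Finset.Ico 1 ℓ, m j := by
      rw [Finset.range_eq_Ico, Finset.sum_eq_sum_Ico_succ_bot h1]
    have h3 : W = ∑ j ∈ Finset.Ico 1 ℓ, m j := by omega
    rw [h3]
    push_cast
    rfl
  have hu_pos : ∀ b t, 1 ≤ u b t := by
    intro b t
    rw [hu]
    dsimp only
    have h1 : (0 : ℤ) ≤ ∑ j ∈ Finset.range ℓ, if 1 ≤ j ∧ v j < b then (m j : ℤ) else 0 :=
      Finset.sum_nonneg fun j _ => by split <;> positivity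
    have h2 : (0 : ℤ) ≤ (t : ℤ) := Int.natCast_nonneg t
    linarith
  have hu_ub : ∀ i t, 1 ≤ i → i < ℓ → t < m i → u (v i) t ≤ (W : ℤ) := by
    intro i t h1 hi ht
    rw [husum i h1 hi t, hWsum (by omega)]
    have hsplit : ∑ j ∈ Finset.Ico 1 ℓ, (m j : ℤ)
        = ∑ j ∈ Finset.Ico 1 (i + 1), (m j : ℤ) + ∑ j ∈ Finset.Ico (i + 1) ℓ, (m j : ℤ) :=
      (Finset.sum_Ico_consecutive _ (by omega) (by omega)).symm
    have htop : ∑ j ∈ Finset.Ico 1 (i + 1), (m j : ℤ)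
        = ∑ j ∈ Finset.Ico 1 i, (m j : ℤ) + (m i : ℤ) := Finset.sum_Ico_succ_top (by omega) _
    have hrest : (0 : ℤ) ≤ ∑ j ∈ Finset.Ico (i + 1) ℓ, (m j : ℤ) :=
      Finset.sum_nonneg fun _ _ => by positivity
    have hti : (t : ℤ) + 1 ≤ (m i : ℤ) := by exact_mod_cast ht
    linarith
  have hu_lt : ∀ i i' t t', 1 ≤ i → i < i' → i' < ℓ → t < m i → u (v i) t < u (v i') t' := by
    intro i i' t t' h1 hii hi' ht
    rw [husum i h1 (hii.trans hi') t, husum i' (by omega) hi' t']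
    have hsub : ∑ j ∈ Finset.Ico 1 (i + 1), (m j : ℤ) ≤ ∑ j ∈ Finset.Ico 1 i', (m j : ℤ) :=
      Finset.sum_le_sum_of_subset_of_nonneg
        (Finset.Ico_subset_Ico le_rfl (by omega)) (fun _ _ _ => by positivity)
    have htop : ∑ j ∈ Finset.Ico 1 (i + 1), (m j : ℤ)
        = ∑ j ∈ Finset.Ico 1 i, (m j : ℤ) + (m i : ℤ) := Finset.sum_Ico_succ_top (by omega) _
    have hti : (t : ℤ) + 1 ≤ (m i : ℤ) := by exact_mod_cast ht
    have ht' : (0 : ℤ) ≤ (t' : ℤ) := Int.natCast_nonneg t'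
    linarith
  have hu_inj : ∀ i i' t t', 1 ≤ i → i < ℓ → 1 ≤ i' → i' < ℓ → t < m i → t' < m i' →
      u (v i) t = u (v i') t' → i = i' ∧ t = t' := by
    intro i i' t t' h1 hi h1' hi' ht ht' heq
    rcases lt_trichotomy i i' with h | h | h
    · exact absurd heq (ne_of_lt (hu_lt i i' t t' h1 h hi' ht))
    · subst h
      refine ⟨rfl, ?_⟩
      rw [husum i h1 hi t, husum i h1 hi t'] at heq
      have : (t : ℤ) = (t' : ℤ) := by linarith
      exact_mod_cast this
    · exact absurd heq.symm (ne_of_lt (hu_lt i' i t' t h1' h hi ht'))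
  -- facts about M
  have hMcount : ∀ i, i < ℓ → M.count (v i) = m i := by
    intro i hi
    rw [hM, Multiset.count_sum']
    rw [Finset.sum_eq_single_of_mem i (Finset.mem_range.mpr hi)]
    · rw [Multiset.count_replicate, if_pos rfl]
    · intro j hj hne
      rw [Multiset.count_replicate, if_neg]
      intro he
      exact hne ((hvinj i j hi (Finset.mem_range.mp hj) he.symm).symm)
  have hMmem : ∀ x : ℤ, x ∈ M → ∃ i, i < ℓ ∧ x = v i := by
    intro x hx
    rw [hM] at hx
    rw [Multiset.mem_sum] at hx
    obtain ⟨i, hi, hxi⟩ := hx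
    exact ⟨i, Finset.mem_range.mp hi, Multiset.eq_of_mem_replicate hxi⟩
  -- the key one-step lemma
  set F : List ℤ → ℤ := fun σ => Fker u [] σ with hF
  have key : ∀ σ' π' : List ℤ, (↑σ' : Multiset ℤ) = M → AdjTrans σ' π' →
      ∃ (i t : ℕ) (l₁ l₂ : List ℤ) (a : ℤ),
        1 ≤ i ∧ i < ℓ ∧ t < m i ∧ t = l₁.count (v i) ∧ a < v i ∧
        ((σ' = l₁ ++ a :: v i :: l₂ ∧ π' = l₁ ++ v i :: a :: l₂ ∧ F π' = F σ' + u (v i) t) ∨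
         (σ' = l₁ ++ v i :: a :: l₂ ∧ π' = l₁ ++ a :: v i :: l₂ ∧ F σ' = F π' + u (v i) t)) := by
    intro σ' π' hms hadj
    obtain ⟨l₁, l₂, x, y, hxy, e1, e2⟩ := hadj
    have hxM : x ∈ M := by
      rw [← hms]
      rw [Multiset.mem_coe, e1]
      simp
    have hyM : y ∈ M := by
      rw [← hms]
      rw [Multiset.mem_coe, e1]
      simp
    obtain ⟨j, hj, hxj⟩ := hMmem x hxM
    obtain ⟨i, hi, hyi⟩ := hMmem y hyM
    rcases hxy.lt_or_gt with hlt | hlt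
    · -- x < y, larger is y = v i
      have h1i : 1 ≤ i := by
        rcases Nat.eq_zero_or_pos i with h0 | h0
        · exfalso
          have : (0:ℕ) < j := by
            rcases Nat.eq_zero_or_pos j with hj0 | hj0
            · exfalso; rw [hxj, hyi, hj0, h0] at hlt; exact lt_irrefl _ hlt
            · exact hj0
          have := hv 0 j this hj
          rw [← h0, ← hyi, ← hxj] at this
          exact absurd (this.trans hlt) (lt_irrefl _)
        · exact h0
      have hcnt : l₁.count y < m i := by
        have hc1 : σ'.count y = m i := by
          have := hMcount i hi
          rw [← hyi] at this
          rw [← this, ← hms, Multiset.coe_count]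
        have hc2 : l₁.count y + 1 ≤ σ'.count y := by
          rw [e1, List.count_append]
          have : 0 < (x :: y :: l₂).count y := List.count_pos_iff.mpr (by simp)
          omega
        omega
      subst hyi
      refine ⟨i, l₁.count (v i), l₁, l₂, x, h1i, hi, hcnt, rfl, hlt, Or.inl ⟨e1, e2, ?_⟩⟩
      have hs := Fker_swap u x (v i) hlt l₁ [] l₂
      simp only [hF, e1, e2]
      simpa using hs
    · -- y < x, larger is x = v j
      have h1j : 1 ≤ j := by
        rcases Nat.eq_zero_or_pos j with h0 | h0
        · exfalso
          have : (0:ℕ) < i := by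
            rcases Nat.eq_zero_or_pos i with hi0 | hi0
            · exfalso; rw [hxj, hyi, hi0, h0] at hlt; exact lt_irrefl _ hlt
            · exact hi0
          have := hv 0 i this hi
          rw [← h0, ← hyi, ← hxj] at this
          exact absurd (this.trans hlt) (lt_irrefl _)
        · exact h0
      have hcnt : l₁.count x < m j := by
        have hc1 : σ'.count x = m j := by
          have := hMcount j hj
          rw [← hxj] at this
          rw [← this, ← hms, Multiset.coe_count]
        have hc2 : l₁.count x + 1 ≤ σ'.count x := by
          rw [e1, List.count_append]
          have : 0 < (x :: y :: l₂).count x := List.count_pos_iff.mpr (by simp)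
          omega
        omega
      subst hxj
      refine ⟨j, l₁.count (v j), l₁, l₂, y, h1j, hj, hcnt, rfl, hlt, Or.inr ⟨e1, e2, ?_⟩⟩
      have hs := Fker_swap u y (v j) hlt l₁ [] l₂
      simp only [hF, e1, e2]
      simpa using hs
  -- the ambient set S and pigeonhole
  set S : Set (List ℤ) := {σ : List ℤ | (↑σ : Multiset ℤ) = M} with hS
  have hfin : S.Finite := by
    apply Set.Finite.subset (M.toList.permutations.finite_toSet)
    intro σ hσ
    have : σ.Perm M.toList := by
      rw [← Multiset.coe_eq_coe, Multiset.coe_toList]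
      exact hσ
    exact List.mem_permutations.mpr this
  set T : Finset (List ℤ) := hfin.toFinset with hT
  set f : List ℤ → ZMod q := fun σ => ((F σ : ℤ) : ZMod q) with hf
  haveI : Nonempty (ZMod q) := ⟨0⟩
  obtain ⟨a, -, ha⟩ := Finset.exists_max_image (Finset.univ : Finset (ZMod q))
    (fun b => (T.filter (fun σ => f σ = b)).card) Finset.univ_nonempty
  set CF : Finset (List ℤ) := T.filter (fun σ => f σ = a) with hCF
  have hTsum : T.card = ∑ b : ZMod q, (T.filter (fun σ => f σ = b)).card :=
    Finset.card_eq_sum_card_fiberwise (fun x _ => Finset.mem_univ (f x))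
  have hTle : T.card ≤ q * CF.card := by
    rw [hTsum]
    calc ∑ b : ZMod q, (T.filter (fun σ => f σ = b)).card
        ≤ ∑ _b : ZMod q, CF.card := Finset.sum_le_sum fun b _ => ha b (Finset.mem_univ b)
      _ = Fintype.card (ZMod q) * CF.card := by
          rw [Finset.sum_const, Finset.card_univ, smul_eq_mul]
      _ = q * CF.card := by rw [ZMod.card]
  have hqZ : (q : ℤ) = 2 * (W : ℤ) + 1 := by rw [hq]; push_cast; ring
  refine ⟨(↑CF : Set (List ℤ)), ?_, ?_, ?_⟩
  · intro σ hσ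
    have h1 : σ ∈ T := (Finset.mem_filter.mp (Finset.mem_coe.mp hσ)).1
    exact (Set.Finite.mem_toFinset hfin).mp h1
  · -- minimum distance
    intro σ hσ π hπ hne
    have hσF := Finset.mem_filter.mp (Finset.mem_coe.mp hσ)
    have hπF := Finset.mem_filter.mp (Finset.mem_coe.mp hπ)
    have hσS : (↑σ : Multiset ℤ) = M := (Set.Finite.mem_toFinset hfin).mp hσF.1
    have hπS : (↑π : Multiset ℤ) = M := (Set.Finite.mem_toFinset hfin).mp hπF.1
    have hdvd : (q : ℤ) ∣ (F π - F σ) := by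
      have h0 : ((F π - F σ : ℤ) : ZMod q) = 0 := by
        push_cast
        have e1 : ((F σ : ℤ) : ZMod q) = f σ := rfl
        have e2 : ((F π : ℤ) : ZMod q) = f π := rfl
        rw [e1, e2, hσF.2, hπF.2, sub_self]
      exact (ZMod.intCast_zmod_eq_zero_iff_dvd _ _).mp h0
    apply le_csInf
    · obtain ⟨n, hn⟩ := Stmt8Aux.connect π σ (Multiset.coe_eq_coe.mp (hσS.trans hπS.symm))
      exact ⟨n, hn⟩
    · intro n hn
      have hn' : StepsTo n σ π := hn
      rcases n with _ | _ | _ | n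
      · exact absurd hn' hne
      · -- one step is impossible
        exfalso
        obtain ⟨τ, hadj, hτ⟩ := hn'
        have hτπ : τ = π := hτ
        subst hτπ
        obtain ⟨i, t, l₁, l₂, aa, h1i, hi, ht, hteq, halt, hcase⟩ := key σ τ hσS hadj
        have hw1 : 1 ≤ u (v i) t := hu_pos _ _
        have hw2 : u (v i) t ≤ (W : ℤ) := hu_ub i t h1i hi ht
        rcases hcase with ⟨-, -, hΔ⟩ | ⟨-, -, hΔ⟩
        · have h1 : F τ - F σ = u (v i) t := by linarith
          have := Int.le_of_dvd (by omega) (h1 ▸ hdvd)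
          omega
        · have h1 : F τ - F σ = -(u (v i) t) := by linarith
          have h2 : (q : ℤ) ∣ (u (v i) t) := by
            have := h1 ▸ hdvd
            exact (dvd_neg).mp this
          have := Int.le_of_dvd (by omega) h2
          omega
      · -- two steps are impossible
        exfalso
        obtain ⟨τ, hadj1, hrest⟩ := hn'
        obtain ⟨ρ, hadj2, hρ⟩ := hrest
        have hρπ : ρ = π := hρ
        subst hρπ
        have hτS : (↑τ : Multiset ℤ) = M := by
          rw [← hσS]
          exact (Multiset.coe_eq_coe.mpr (adj_perm hadj1)).symm
        obtain ⟨i, t, l₁, l₂, aa, h1i, hi, ht, hteq, halt, hc1⟩ := key σ τ hσS hadj1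
        obtain ⟨i', t', L, R, cc, h1i', hi', ht', hteq', hclt, hc2⟩ := key τ ρ hτS hadj2
        have hw1 : 1 ≤ u (v i) t := hu_pos _ _
        have hw2 : u (v i) t ≤ (W : ℤ) := hu_ub i t h1i hi ht
        have hw1' : 1 ≤ u (v i') t' := hu_pos _ _
        have hw2' : u (v i') t' ≤ (W : ℤ) := hu_ub i' t' h1i' hi' ht'
        rcases hc1 with ⟨e1, e2, hΔ1⟩ | ⟨e1, e2, hΔ1⟩ <;>
          rcases hc2 with ⟨e1', e2', hΔ2⟩ | ⟨e1', e2', hΔ2⟩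
        · -- (+,+)
          have h1 : F ρ - F σ = u (v i) t + u (v i') t' := by linarith
          have := Int.le_of_dvd (by omega) (h1 ▸ hdvd)
          omega
        · -- (+,-) : same slot, cancels, forces ρ = σ
          have h1 : F ρ - F σ = u (v i) t - u (v i') t' := by linarith
          have h0 : u (v i) t = u (v i') t' := by
            by_contra hne2
            have habs : (q : ℤ) ≤ |u (v i) t - u (v i') t'| :=
              Int.le_of_dvd (abs_pos.mpr (sub_ne_zero.mpr hne2)) ((dvd_abs _ _).mpr (h1 ▸ hdvd))
            rcases abs_cases (u (v i) t - u (v i') t') with ⟨he, -⟩ | ⟨he, -⟩ <;> omega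
          obtain ⟨hii, htt⟩ := hu_inj i i' t t' h1i hi h1i' hi' ht ht' h0
          subst hii; subst htt
          -- τ = l₁ ++ v i :: aa :: l₂ = L ++ v i :: cc :: R with equal prefix counts
          have hpc : l₁.count (v i) = L.count (v i) := by omega
          obtain ⟨hL, hQ⟩ := prefix_eq_of_count (v i) l₁ L (aa :: l₂) (cc :: R)
            (by rw [← e2, e1']) hpc
          have haacc : aa = cc := by injection hQ
          have hl₂R : l₂ = R := by injection hQ
          apply hne
          rw [e1, e2', ← hL, ← haacc, ← hl₂R]
        · -- (-,+) : same slot, cancels, forces ρ = σ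
          have h1 : F ρ - F σ = u (v i') t' - u (v i) t := by linarith
          have h0 : u (v i) t = u (v i') t' := by
            by_contra hne2
            have habs : (q : ℤ) ≤ |u (v i') t' - u (v i) t| :=
              Int.le_of_dvd (abs_pos.mpr (sub_ne_zero.mpr (fun hh => hne2 hh.symm)))
                ((dvd_abs _ _).mpr (h1 ▸ hdvd))
            rcases abs_cases (u (v i') t' - u (v i) t) with ⟨he, -⟩ | ⟨he, -⟩ <;> omega
          obtain ⟨hii, htt⟩ := hu_inj i i' t t' h1i hi h1i' hi' ht ht' h0
          subst hii; subst htt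
          -- τ = (l₁ ++ [aa]) ++ v i :: l₂ = (L ++ [cc]) ++ v i :: R
          have he2 : τ = (l₁ ++ [aa]) ++ v i :: l₂ := by rw [e2]; simp
          have he1' : τ = (L ++ [cc]) ++ v i :: R := by rw [e1']; simp
          have hpc : (l₁ ++ [aa]).count (v i) = (L ++ [cc]).count (v i) := by
            rw [List.count_append, List.count_append]
            have ha1 : [aa].count (v i) = 0 := by
              simp [List.count_singleton]
              exact fun hh => absurd hh (ne_of_lt halt)
            have ha2 : [cc].count (v i) = 0 := by
              simp [List.count_singleton]
              exact fun hh => absurd hh (ne_of_lt hclt)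
            omega
          obtain ⟨hL, hQ⟩ := prefix_eq_of_count (v i) (l₁ ++ [aa]) (L ++ [cc]) l₂ R
            (by rw [← he2, he1']) hpc
          obtain ⟨hL2, hs2⟩ := List.append_inj' hL rfl
          have haacc : aa = cc := by injection hs2
          apply hne
          rw [e1, e2', ← hL2, ← haacc, ← hQ]
        · -- (-,-)
          have h1 : F ρ - F σ = -(u (v i) t + u (v i') t') := by linarith
          have h2 : (q : ℤ) ∣ (u (v i) t + u (v i') t') := (dvd_neg).mp (h1 ▸ hdvd)
          have := Int.le_of_dvd (by omega) h2
          omega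
      · omega
  · -- cardinality bound
    rw [Set.ncard_coe_finset]
    have hSn : S.ncard = T.card := Set.ncard_eq_toFinset_card S hfin
    rcases le_or_gt (2 * (((∑ i ∈ Finset.range ℓ, m i : ℕ) : ℝ) - (m 0 : ℝ)) + 1) 0 with hD | hD
    · exact le_trans (div_nonpos_of_nonneg_of_nonpos (Nat.cast_nonneg _) hD) (Nat.cast_nonneg _)
    · have hm0 : m 0 ≤ ∑ i ∈ Finset.range ℓ, m i := by
        by_contra hcon
        push_neg at hcon
        have hc : ((∑ i ∈ Finset.range ℓ, m i : ℕ) : ℝ) + 1 ≤ (m 0 : ℝ) := by exact_mod_cast hcon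
        linarith
      have hDq : (2 * (((∑ i ∈ Finset.range ℓ, m i : ℕ) : ℝ) - (m 0 : ℝ)) + 1) = (q : ℝ) := by
        rw [hq, hWdef]
        push_cast [hm0]
        ring
      rw [hDq, div_le_iff₀ (by exact_mod_cast Nat.pos_of_ne_zero (by omega))]
      have hfinal : S.ncard ≤ q * CF.card := by rw [hSn]; exact hTle
      calc (S.ncard : ℝ) ≤ ((q * CF.card : ℕ) : ℝ) := by exact_mod_cast hfinal
        _ = (CF.card : ℝ) * (q : ℝ) := by push_cast; ring
end

section
/- Let q ≥ N and let h_1, ..., h_N be integers with 0 < h_i < q for all i. Assume that for every integer vector e ∈ Z^N with Manhattan weight ||e|| ≤ t, the sums Σ_{i=1}^{N} e_i·h_i are all distinct modulo q (distinct e with ||e|| ≤ t give distinct residues). Then the code C = { x ∈ (Z_q)^N : Σ_{i=1}^{N} x_i·h_i ≡ 0 (mod q) } is a linear t-error-correcting code in (Z_q)^N with the Lee metric, i.e., its minimum Lee distance is at least 2t+1. -/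
/-- Splitting lemma: a vector of Manhattan weight at most `2t` splits as a difference of
two vectors each of Manhattan weight at most `t`. -/
lemma split_weight (N t : ℕ) (e : Fin N → ℤ) (hle : ∑ i, (e i).natAbs ≤ 2 * t) :
    ∃ f g : Fin N → ℤ, (∀ i, e i = f i - g i) ∧
      (∑ i, (f i).natAbs) ≤ t ∧ (∑ i, (g i).natAbs) ≤ t := by
  set E : ℕ → ℤ := fun i => if hi : i < N then |e ⟨i, hi⟩| else 0 with hE
  set S : ℕ → ℤ := fun k => ∑ i ∈ Finset.range k, E i with hS
  set m : ℕ → ℤ := fun i => min (S (i + 1)) (t : ℤ) - min (S i) (t : ℤ) with hm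
  have hE0 : ∀ i, 0 ≤ E i := by
    intro i; simp only [hE]; split
    · exact abs_nonneg _
    · exact le_refl 0
  have hSstep : ∀ i, S (i + 1) = S i + E i := fun i => Finset.sum_range_succ E i
  have hm0 : ∀ i, 0 ≤ m i := by
    intro i
    have h1 : min (S i) (t : ℤ) ≤ min (S (i + 1)) (t : ℤ) := by
      apply min_le_min _ le_rfl
      rw [hSstep]; linarith [hE0 i]
    simp only [hm]; linarith
  have hmle : ∀ i, m i ≤ E i := by
    intro i
    have := hE0 i
    simp only [hm, hSstep i, min_def]
    split_ifs <;> linarith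
  have hSN : S N = ∑ i : Fin N, |e i| := by
    show (∑ i ∈ Finset.range N, E i) = _
    rw [Finset.sum_range fun i => E i]
    apply Finset.sum_congr rfl
    intro i _
    simp only [hE, i.isLt, dif_pos, Fin.eta]
  have hsumm : ∑ i : Fin N, m (i : ℕ) = min (S N) (t : ℤ) := by
    rw [← Finset.sum_range fun i => m i]
    have := Finset.sum_range_sub (fun k => min (S k) (t : ℤ)) N
    simp only [hm]
    rw [this]
    simp [hS]
  refine ⟨fun i => if 0 ≤ e i then m i else -(m i),
    fun i => (if 0 ≤ e i then m i else -(m i)) - e i, fun i => by ring, ?_, ?_⟩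
  · have habs : ∀ i : Fin N, |if 0 ≤ e i then m (i : ℕ) else -(m (i : ℕ))| = m i := by
      intro i; split
      · exact abs_of_nonneg (hm0 i)
      · rw [abs_neg]; exact abs_of_nonneg (hm0 i)
    have : ((∑ i : Fin N, (if 0 ≤ e i then m (i : ℕ) else -(m (i : ℕ))).natAbs : ℕ) : ℤ)
        ≤ (t : ℤ) := by
      push_cast [Int.natCast_natAbs]
      calc ∑ i : Fin N, |if 0 ≤ e i then m (i : ℕ) else -(m (i : ℕ))|
          = ∑ i : Fin N, m (i : ℕ) := Finset.sum_congr rfl fun i _ => habs i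
        _ = min (S N) (t : ℤ) := hsumm
        _ ≤ (t : ℤ) := min_le_right _ _
    exact_mod_cast this
  · have hEi : ∀ i : Fin N, E (i : ℕ) = |e i| := by
      intro i; simp only [hE, i.isLt, dif_pos, Fin.eta]
    have habs : ∀ i : Fin N,
        |(if 0 ≤ e i then m (i : ℕ) else -(m (i : ℕ))) - e i| = |e i| - m (i : ℕ) := by
      intro i
      have h1 := hm0 (i : ℕ)
      have h2 := hmle (i : ℕ)
      rw [hEi i] at h2
      rcases le_or_gt 0 (e i) with hpos | hneg
      · rw [if_pos hpos, abs_of_nonneg hpos] at *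
        rw [abs_of_nonpos (by linarith)]; ring
      · rw [if_neg (not_le.mpr hneg), abs_of_neg hneg] at *
        rw [abs_of_nonneg (by linarith)]; ring
    have hSN2 : S N ≤ 2 * (t : ℤ) := by
      rw [hSN]
      have : ((∑ i, (e i).natAbs : ℕ) : ℤ) ≤ ((2 * t : ℕ) : ℤ) := by exact_mod_cast hle
      calc ∑ i : Fin N, |e i| = ((∑ i, (e i).natAbs : ℕ) : ℤ) := by
            push_cast [Int.natCast_natAbs]; rfl
        _ ≤ ((2 * t : ℕ) : ℤ) := this
        _ = 2 * (t : ℤ) := by push_cast; ring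
    have : ((∑ i : Fin N,
        ((if 0 ≤ e i then m (i : ℕ) else -(m (i : ℕ))) - e i).natAbs : ℕ) : ℤ)
        ≤ (t : ℤ) := by
      push_cast [Int.natCast_natAbs]
      calc ∑ i : Fin N, |(if 0 ≤ e i then m (i : ℕ) else -(m (i : ℕ))) - e i|
          = ∑ i : Fin N, (|e i| - m (i : ℕ)) := Finset.sum_congr rfl fun i _ => habs i
        _ = S N - min (S N) (t : ℤ) := by
            rw [Finset.sum_sub_distrib, hsumm, hSN]
        _ ≤ (t : ℤ) := by
            rcases le_total (S N) (t : ℤ) with h | h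
            · rw [min_eq_left h]; linarith
            · rw [min_eq_right h]; linarith [hSN2]
    exact_mod_cast this

/-- Theorem 3, Varshamov–Tenengolts. Let `q ≥ N` and let
`h 0, …, h (N-1)` be integers with `0 < h i < q`.  Assume that for every integer vector
`e ∈ Z^N` of Manhattan weight at most `t` the sums `∑ e i · h i` are all distinct modulo
`q`.  Then the code `C = {x ∈ (Z_q)^N : ∑ x i · h i ≡ 0 (mod q)}` is a linear
`t`-error-correcting code in `(Z_q)^N` with the Lee metric: it is linear and distinct
codewords are at Lee distance at least `2t + 1`. -/

theorem stmt9 (q N t : ℕ) (hqN : N ≤ q) (h : Fin N → ℤ)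
    (hh : ∀ i, 0 < h i ∧ h i < (q : ℤ))
    (hdist : ∀ e e' : Fin N → ℤ,
      (∑ i, (e i).natAbs) ≤ t → (∑ i, (e' i).natAbs) ≤ t →
      Int.ModEq (q : ℤ) (∑ i, e i * h i) (∑ i, e' i * h i) → e = e')
    (C : Set (Fin N → ZMod q))
    (hC : C = {x : Fin N → ZMod q | ∑ i, x i * ((h i : ℤ) : ZMod q) = 0}) :
    (∀ x ∈ C, ∀ y ∈ C, x + y ∈ C) ∧
    (∀ a : ZMod q, ∀ x ∈ C, a • x ∈ C) ∧
    (∀ x ∈ C, ∀ y ∈ C, x ≠ y → 2 * t + 1 ≤ zmodLee x y):= by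
  subst hC
  refine ⟨?_, ?_, ?_⟩
  · intro x hx y hy
    simp only [Set.mem_setOf_eq] at *
    simp [Pi.add_apply, add_mul, Finset.sum_add_distrib, hx, hy]
  · intro a x hx
    simp only [Set.mem_setOf_eq] at *
    simp [Pi.smul_apply, smul_eq_mul, mul_assoc, ← Finset.mul_sum, hx]
  · intro x hx y hy hne
    by_contra hlt
    push_neg at hlt
    have hle2t : zmodLee x y ≤ 2 * t := by omega
    have hN : 0 < N := by
      rcases Nat.eq_zero_or_pos N with h0 | h0
      · exact absurd (funext fun i => absurd i.isLt (by omega)) hne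
      · exact h0
    have hq : 0 < q := lt_of_lt_of_le hN hqN
    haveI : NeZero q := ⟨hq.ne'⟩
    set z : Fin N → ZMod q := fun i => x i - y i with hz
    set e : Fin N → ℤ := fun i =>
      if (z i).val ≤ (-(z i)).val then ((z i).val : ℤ) else -(((-(z i)).val : ℤ)) with he
    have habs : ∀ i, (e i).natAbs = min (x i - y i).val (y i - x i).val := by
      intro i
      simp only [he, hz]
      have hneg : -(x i - y i) = y i - x i := by ring
      split
      · rw [Int.natAbs_natCast, min_eq_left]
        rwa [hneg] at *
      · rw [Int.natAbs_neg, Int.natAbs_natCast, hneg, min_eq_right]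
        rw [hneg] at *
        omega
    have hwt : ∑ i, (e i).natAbs ≤ 2 * t := by
      calc ∑ i, (e i).natAbs = zmodLee x y := Finset.sum_congr rfl fun i _ => habs i
        _ ≤ 2 * t := hle2t
    have hcast : ∀ i, ((e i : ZMod q)) = z i := by
      intro i
      simp only [he]
      split
      · push_cast
        rw [ZMod.natCast_val, ZMod.cast_id]
      · push_cast
        rw [ZMod.natCast_val, ZMod.cast_id]
        ring
    have hdvd : (q : ℤ) ∣ ∑ i, e i * h i := by
      rw [← ZMod.intCast_zmod_eq_zero_iff_dvd]
      push_cast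
      have : ∀ i : Fin N, ((e i : ZMod q)) * ((h i : ℤ) : ZMod q)
          = z i * ((h i : ℤ) : ZMod q) := fun i => by rw [hcast i]
      rw [Finset.sum_congr rfl fun i _ => this i]
      have hx' := Set.mem_setOf_eq ▸ hx
      have hy' := Set.mem_setOf_eq ▸ hy
      simp only [hz, sub_mul, Finset.sum_sub_distrib]
      rw [hx', hy', sub_zero]
    obtain ⟨f, g, hfg, hf, hg⟩ := split_weight N t e hwt
    have hmod : Int.ModEq (q : ℤ) (∑ i, f i * h i) (∑ i, g i * h i) := by
      rw [Int.modEq_iff_dvd]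
      have : (∑ i, g i * h i) - (∑ i, f i * h i) = -(∑ i, e i * h i) := by
        rw [← Finset.sum_sub_distrib, ← Finset.sum_neg_distrib]
        exact Finset.sum_congr rfl fun i _ => by rw [hfg i]; ring
      rw [this]
      exact hdvd.neg_right
    have hfgeq := hdist f g hf hg hmod
    have he0 : ∀ i, e i = 0 := by
      intro i
      rw [hfg i, hfgeq]
      ring
    apply hne
    funext i
    have := he0 i
    simp only [he] at this
    have hz0 : z i = 0 := by
      split at this
      · have : (z i).val = 0 := by exact_mod_cast this
        exact (ZMod.val_eq_zero _).mp this
      · have : (-(z i)).val = 0 := by omega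
        have := (ZMod.val_eq_zero _).mp this
        have : z i = 0 := by
          have h' : -(z i) = 0 := this
          linear_combination -h'
        exact this
    have : x i - y i = 0 := hz0
    linear_combination this
end

section
/- Let σ, π ∈ S_k and ρ_1, ρ_2 ∈ S(M_{k,r}). Then d_K(σ ∗ ρ_1, π ∗ ρ_2) ≥ d_K(σ, π) + d_K(ρ_1, ρ_2). -/
section Stmt13Aux

lemma adjTrans_mem' {α β : List ℤ} (h : AdjTrans α β) : ∀ x, x ∈ α ↔ x ∈ β := by
  obtain ⟨l₁, l₂, a, b, _, rfl, rfl⟩ := h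
  intro x; simp; tauto

lemma adjTrans_cons' {a : ℤ} {α β : List ℤ} (h : AdjTrans α β) : AdjTrans (a :: α) (a :: β) := by
  obtain ⟨l₁, l₂, x, y, hxy, rfl, rfl⟩ := h
  exact ⟨a :: l₁, l₂, x, y, hxy, rfl, rfl⟩

lemma stepsTo_cons' {a : ℤ} : ∀ {n : ℕ} {α β : List ℤ}, StepsTo n α β → StepsTo n (a :: α) (a :: β)
  | 0, α, β, h => by simp [StepsTo] at *; rw [h]
  | n+1, α, β, ⟨τ, h1, h2⟩ => ⟨a :: τ, adjTrans_cons' h1, stepsTo_cons' h2⟩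

lemma stepsTo_trans' : ∀ {m n : ℕ} {α β γ : List ℤ}, StepsTo m α β → StepsTo n β γ →
    StepsTo (m + n) α γ
  | 0, n, α, β, γ, h1, h2 => by simp [StepsTo] at h1; rwa [Nat.zero_add, h1]
  | m+1, n, α, β, γ, ⟨τ, h1, h1'⟩, h2 => by
      have := stepsTo_trans' h1' h2
      exact (by rw [Nat.add_right_comm]; exact ⟨τ, h1, this⟩)

lemma steps_move' (b : ℤ) : ∀ (l₁ l₂ : List ℤ), b ∉ l₁ →
    StepsTo l₁.length (l₁ ++ b :: l₂) (b :: (l₁ ++ l₂))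
  | [], l₂, _ => by simp [StepsTo]
  | a :: l₁, l₂, h => by
      have ha : a ≠ b := by simp at h; tauto
      have hb : b ∉ l₁ := by simp at h; tauto
      have s1 : StepsTo l₁.length (a :: (l₁ ++ b :: l₂)) (a :: b :: (l₁ ++ l₂)) :=
        stepsTo_cons' (steps_move' b l₁ l₂ hb)
      have s2 : StepsTo 1 (a :: b :: (l₁ ++ l₂)) (b :: a :: (l₁ ++ l₂)) :=
        ⟨b :: a :: (l₁ ++ l₂), ⟨[], l₁ ++ l₂, a, b, ha, rfl, rfl⟩, rfl⟩
      simpa using stepsTo_trans' s1 s2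

lemma exists_split' {b : ℤ} : ∀ {α : List ℤ}, b ∈ α →
    ∃ l₁ l₂, α = l₁ ++ b :: l₂ ∧ b ∉ l₁ := by
  intro α
  induction α with
  | nil => simp
  | cons a α ih =>
    intro h
    by_cases hab : a = b
    · subst hab; exact ⟨[], α, rfl, by simp⟩
    · have : b ∈ α := by simp at h; tauto
      obtain ⟨l₁, l₂, rfl, hb⟩ := ih this
      exact ⟨a :: l₁, l₂, rfl, by simp [hb, hab]; tauto⟩

lemma connect' : ∀ (β α : List ℤ), (↑α : Multiset ℤ) = ↑β → ∃ n, StepsTo n α β := by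
  intro β
  induction β with
  | nil => intro α h; exact ⟨0, by simpa [StepsTo] using h⟩
  | cons b β ih =>
    intro α h
    have hb : b ∈ α := by
      have : b ∈ (↑α : Multiset ℤ) := by rw [h]; simp
      simpa using this
    obtain ⟨l₁, l₂, rfl, hnb⟩ := exists_split' hb
    have hp : (l₁ ++ b :: l₂).Perm (b :: β) := Multiset.coe_eq_coe.mp h
    have hm : (↑(l₁ ++ l₂) : Multiset ℤ) = ↑β :=
      Multiset.coe_eq_coe.mpr ((List.perm_middle.symm.trans hp).cons_inv)
    obtain ⟨n, hn⟩ := ih _ hm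
    exact ⟨l₁.length + n, stepsTo_trans' (steps_move' b l₁ l₂ hnb) (stepsTo_cons' hn)⟩

lemma proj_step' (k : ℕ) {α β : List ℤ} (hpos : ∀ x ∈ α, 1 ≤ x) (h : AdjTrans α β) :
    (AdjTrans (restrictTo k α) (restrictTo k β) ∧ mapToZero k α = mapToZero k β) ∨
    (restrictTo k α = restrictTo k β ∧ AdjTrans (mapToZero k α) (mapToZero k β)) := by
  obtain ⟨l₁, l₂, a, b, hab, rfl, rfl⟩ := h
  have ha1 : (1:ℤ) ≤ a := hpos a (by simp)
  have hb1 : (1:ℤ) ≤ b := hpos b (by simp)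
  by_cases hak : a ≤ (k:ℤ) <;> by_cases hbk : b ≤ (k:ℤ)
  · left
    constructor
    · refine ⟨restrictTo k l₁, restrictTo k l₂, a, b, hab, ?_, ?_⟩ <;>
        simp [restrictTo, hak, hbk]
    · simp [mapToZero, ha1, hb1, hak, hbk]
  · right
    constructor
    · simp [restrictTo, hak, hbk]
    · refine ⟨mapToZero k l₁, mapToZero k l₂, 0, b, ?_, ?_, ?_⟩
      · intro h0; omega
      · simp [mapToZero, ha1, hb1, hak, hbk]
      · simp [mapToZero, ha1, hb1, hak, hbk]
  · right
    constructor
    · simp [restrictTo, hak, hbk]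
    · refine ⟨mapToZero k l₁, mapToZero k l₂, a, 0, ?_, ?_, ?_⟩
      · intro h0; omega
      · simp [mapToZero, ha1, hb1, hak, hbk]
      · simp [mapToZero, ha1, hb1, hak, hbk]
  · right
    constructor
    · simp [restrictTo, hak, hbk]
    · refine ⟨mapToZero k l₁, mapToZero k l₂, a, b, hab, ?_, ?_⟩ <;>
        simp [mapToZero, ha1, hb1, hak, hbk]

lemma proj_steps' (k : ℕ) : ∀ (n : ℕ) (α β : List ℤ), (∀ x ∈ α, 1 ≤ x) → StepsTo n α β →
    ∃ n₁ n₂, n₁ + n₂ ≤ n ∧ StepsTo n₁ (restrictTo k α) (restrictTo k β) ∧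
      StepsTo n₂ (mapToZero k α) (mapToZero k β) := by
  intro n
  induction n with
  | zero =>
    intro α β _ h
    have h' : α = β := h
    subst h'
    exact ⟨0, 0, le_refl _, rfl, rfl⟩
  | succ n ih =>
    rintro α β hpos ⟨τ, h1, h2⟩
    have hposτ : ∀ x ∈ τ, 1 ≤ x := fun x hx => hpos x ((adjTrans_mem' h1 x).mpr hx)
    obtain ⟨n₁, n₂, hle, s1, s2⟩ := ih τ β hposτ h2
    rcases proj_step' k hpos h1 with ⟨hadj, heq⟩ | ⟨heq, hadj⟩
    · exact ⟨n₁ + 1, n₂, by omega, ⟨restrictTo k τ, hadj, s1⟩, by rw [heq]; exact s2⟩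
    · exact ⟨n₁, n₂ + 1, by omega, by rw [heq]; exact s1, ⟨mapToZero k τ, hadj, s2⟩⟩

lemma star_key' (k : ℕ) : ∀ (ρ σ : List ℤ), ρ.count 0 = σ.length →
    (∀ x ∈ σ, 1 ≤ x ∧ x ≤ (k:ℤ)) → (∀ x ∈ ρ, x = 0 ∨ (k:ℤ) < x) →
    restrictTo k (starP σ ρ) = σ ∧ mapToZero k (starP σ ρ) = ρ ∧
    (∀ x ∈ starP σ ρ, 1 ≤ x) ∧
    (↑(starP σ ρ) : Multiset ℤ) = ↑σ + ↑(ρ.filter (fun x => decide (x ≠ 0)))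
  | [], σ, hc, hσ, hρ => by
    have : σ = [] := List.eq_nil_of_length_eq_zero (by simpa using hc.symm)
    subst this; simp [starP, restrictTo, mapToZero]
  | x :: ρ', σ, hc, hσ, hρ => by
    by_cases hx : x = 0
    · subst hx
      cases σ with
      | nil => simp [List.count_cons] at hc
      | cons h t =>
        have hc' : ρ'.count 0 = t.length := by simp [List.count_cons] at hc; omega
        obtain ⟨e1, e2, e3, e4⟩ := star_key' k ρ' t hc'
          (fun x hx => hσ x (by simp [hx]))
          (fun x hx => hρ x (by simp [hx]))
        have hh := hσ h (by simp)
        constructor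
        · simp [starP, restrictTo, hh.2] at e1 ⊢; exact e1
        constructor
        · simp [starP, mapToZero, hh.1, hh.2] at e2 ⊢; exact e2
        constructor
        · intro y hy
          simp [starP] at hy
          rcases hy with rfl | hy
          · exact hh.1
          · exact e3 y hy
        · have hs : starP (h :: t) ((0:ℤ) :: ρ') = h :: starP t ρ' := by simp [starP]
          have hf : List.filter (fun x => decide (x ≠ 0)) ((0:ℤ) :: ρ') =
              List.filter (fun x => decide (x ≠ 0)) ρ' := by simp
          rw [hs, hf, ← Multiset.cons_coe, ← Multiset.cons_coe, e4, Multiset.cons_add]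
    · have hxk : (k:ℤ) < x := by
        rcases hρ x (by simp) with h0 | h
        · exact absurd h0 hx
        · exact h
      have hc' : ρ'.count 0 = σ.length := by
        simpa [List.count_cons, hx] using hc
      obtain ⟨e1, e2, e3, e4⟩ := star_key' k ρ' σ hc' hσ (fun y hy => hρ y (by simp [hy]))
      have hnle : ¬ x ≤ (k:ℤ) := by omega
      constructor
      · simp [starP, hx, restrictTo, hnle] at e1 ⊢; exact e1
      constructor
      · have : ¬ (1 ≤ x ∧ x ≤ (k:ℤ)) := by omega
        simp [starP, hx, mapToZero, this] at e2 ⊢; exact e2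
      constructor
      · intro y hy
        simp [starP, hx] at hy
        rcases hy with rfl | hy
        · omega
        · exact e3 y hy
      · have hs : starP σ (x :: ρ') = x :: starP σ ρ' := by simp [starP, hx]
        have hf : List.filter (fun y => decide (y ≠ 0)) (x :: ρ') =
            x :: List.filter (fun y => decide (y ≠ 0)) ρ' := by simp [hx]
        rw [hs, hf, ← Multiset.cons_coe, ← Multiset.cons_coe, e4]
        simp only [← Multiset.singleton_add]
        abel

lemma permList_mem' {k : ℕ} {σ : List ℤ} (hσ : permList k σ) :
    ∀ x ∈ σ, 1 ≤ x ∧ x ≤ (k:ℤ) := by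
  intro x hx
  have hx' : x ∈ (↑σ : Multiset ℤ) := by simpa using hx
  rw [hσ] at hx'
  simp [rangeList, List.mem_range'_1] at hx'
  obtain ⟨m, hm, rfl⟩ := hx'
  omega

lemma permList_length' {k : ℕ} {σ : List ℤ} (hσ : permList k σ) : σ.length = k := by
  have hp : σ.Perm (rangeList 1 k) := Multiset.coe_eq_coe.mp hσ
  rw [hp.length_eq]; simp [rangeList, Function.comp_def]

lemma mkr_count' {k r : ℕ} {ρ : List ℤ} (hρ : (↑ρ : Multiset ℤ) = Mkr k r) :
    ρ.count 0 = k := by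
  have hnm : (0:ℤ) ∉ rangeList (k+1) r := by
    simp [rangeList, List.mem_range'_1]
    intro m hm
    omega
  have := congrArg (Multiset.count 0) hρ
  simpa [Mkr, Multiset.count_replicate, List.count_eq_zero_of_not_mem hnm] using this

lemma mkr_mem' {k r : ℕ} {ρ : List ℤ} (hρ : (↑ρ : Multiset ℤ) = Mkr k r) :
    ∀ x ∈ ρ, x = 0 ∨ (k:ℤ) < x := by
  intro x hx
  have hx' : x ∈ (↑ρ : Multiset ℤ) := by simpa using hx
  rw [hρ] at hx'
  simp [Mkr, rangeList, List.mem_range'_1, Multiset.mem_replicate] at hx'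
  rcases hx' with ⟨_, rfl⟩ | ⟨m, hm, rfl⟩
  · left; rfl
  · right; omega

end Stmt13Aux

/-- Lemma 7. Let `σ, π ∈ S_k` and `ρ₁, ρ₂ ∈ S(M_{k,r})`.  Then
`d_K(σ ∗ ρ₁, π ∗ ρ₂) ≥ d_K(σ, π) + d_K(ρ₁, ρ₂)`. -/
theorem stmt13 (k r : ℕ) (σ π ρ₁ ρ₂ : List ℤ)
    (hσ : permList k σ) (hπ : permList k π)
    (hρ₁ : (↑ρ₁ : Multiset ℤ) = Mkr k r) (hρ₂ : (↑ρ₂ : Multiset ℤ) = Mkr k r) :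
    dK σ π + dK ρ₁ ρ₂ ≤ dK (starP σ ρ₁) (starP π ρ₂) := by
  obtain ⟨r1, m1, p1, mu1⟩ := star_key' k ρ₁ σ
    (by rw [mkr_count' hρ₁, permList_length' hσ]) (permList_mem' hσ) (mkr_mem' hρ₁)
  obtain ⟨r2, m2, p2, mu2⟩ := star_key' k ρ₂ π
    (by rw [mkr_count' hρ₂, permList_length' hπ]) (permList_mem' hπ) (mkr_mem' hρ₂)
  have hσ' : (↑σ : Multiset ℤ) = ↑(rangeList 1 k) := hσ
  have hπ' : (↑π : Multiset ℤ) = ↑(rangeList 1 k) := hπ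
  have hAB : (↑(starP σ ρ₁) : Multiset ℤ) = ↑(starP π ρ₂) := by
    rw [mu1, mu2, hσ', hπ']
    congr 1
    have hperm : ρ₁.Perm ρ₂ := Multiset.coe_eq_coe.mp (hρ₁.trans hρ₂.symm)
    exact Multiset.coe_eq_coe.mpr (hperm.filter _)
  obtain ⟨N, hN⟩ := connect' _ _ hAB
  have hmem : StepsTo (dK (starP σ ρ₁) (starP π ρ₂)) (starP σ ρ₁) (starP π ρ₂) :=
    Nat.sInf_mem (⟨N, hN⟩ : Set.Nonempty {n | StepsTo n (starP σ ρ₁) (starP π ρ₂)})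
  obtain ⟨n₁, n₂, hle, s1, s2⟩ := proj_steps' k _ _ _ p1 hmem
  rw [r1, r2] at s1
  rw [m1, m2] at s2
  have d1 : dK σ π ≤ n₁ := Nat.sInf_le s1
  have d2 : dK ρ₁ ρ₂ ≤ n₂ := Nat.sInf_le s2
  omega
end
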